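/- Let K = k((u))((t)) with char k = 0, with valuation ν_K and residue field K̄ = k((u)) with its valuation ν_{K̄}; let π : O_K → K̄ be reduction. Then for all φ, ψ ∈ K* one has res_{K/k}((dφ/φ) ∧ (dψ/ψ)) = det [[ν_{K̄}(π(φ₀)), ν_K(φ)], [ν_{K̄}(π(ψ₀)), ν_K(ψ)]], where φ₀ = φ·t^{−ν_K(φ)} and ψ₀ = ψ·t^{−ν_K(ψ)} are the unit parts; i.e., the total residue of dφ/φ ∧ dψ/ψ equals the 2×2 determinant of the bivaluation vectors of φ and ψ. -/

import Mathlib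

noncomputable section

abbrev LS (k : Type) [Field k] := LaurentSeries k
abbrev LS2 (k : Type) [Field k] := LaurentSeries (LaurentSeries k)

/-- Formal derivative of a Laurent series. -/
def lsDeriv {R : Type} [AddCommGroup R] (f : LaurentSeries R) : LaurentSeries R where
  coeff n := (n + 1) • f.coeff (n + 1)
  isPWO_support' := by
    have h : (Function.support fun n : ℤ => (n + 1) • f.coeff (n + 1)) ⊆
        (fun n : ℤ => n - 1) '' (Function.support f.coeff) := by
      intro n hn
      refine ⟨n + 1, ?_, by ring⟩
      intro h0
      simp [Function.mem_support, h0] at hn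
    exact (f.isPWO_support'.image_of_monotone
      (fun a b hab => by dsimp; omega : Monotone fun n : ℤ => n - 1)).mono h

lemma lsDeriv_zero {R : Type} [AddCommGroup R] : lsDeriv (0 : LaurentSeries R) = 0 := by
  ext n
  simp [lsDeriv]

variable {k : Type} [Field k]

/-- ∂/∂u on k((u))((t)) (outer variable t, inner variable u): coefficientwise derivative. -/
def uDeriv (f : LS2 k) : LS2 k where
  coeff j := lsDeriv (f.coeff j)
  isPWO_support' := by
    refine f.isPWO_support'.mono ?_
    intro j hj
    simp only [Function.mem_support] at hj ⊢
    intro h0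
    exact hj (by rw [h0, lsDeriv_zero])

/-- ∂/∂t on k((u))((t)): derivative in the outer variable. -/
def tDeriv (f : LS2 k) : LS2 k := lsDeriv f

/-- res_u : extracts the coefficient of u^(-1), giving a Laurent series in t. -/
def resU (f : LS2 k) : LS k where
  coeff j := (f.coeff j).coeff (-1)
  isPWO_support' := by
    refine f.isPWO_support'.mono ?_
    intro j hj
    simp only [Function.mem_support] at hj ⊢
    intro h0
    exact hj (by rw [h0]; simp)

/-- One-dimensional residue: coefficient of τ^(-1). -/
def res1 (f : LS k) : k := f.coeff (-1)

/-- Two-dimensional residue: coefficient of u^(-1) t^(-1). -/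
def res2 (f : LS2 k) : k := (f.coeff (-1)).coeff (-1)

/-- The embedding of k((t)) into k((u))((t)) (constants in u). -/
def ofT (g : LS k) : LS2 k where
  coeff j := HahnSeries.C (g.coeff j)
  isPWO_support' := by
    refine g.isPWO_support'.mono ?_
    intro j hj
    simp only [Function.mem_support] at hj ⊢
    intro h0
    exact hj (by rw [h0, map_zero])

/-- The element u of k((u))((t)). -/
def uElem : LS2 k := HahnSeries.single 0 (HahnSeries.single 1 1)

/-- The element t of k((u))((t)). -/
def tElem : LS2 k := HahnSeries.single 1 1

/-- The coefficient of du ∧ dt in (dφ/φ) ∧ (dψ/ψ). -/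
def wedge (φ ψ : LS2 k) : LS2 k :=
  (φ * ψ)⁻¹ * (uDeriv φ * tDeriv ψ - tDeriv φ * uDeriv ψ)

/-- Membership in the group of principal units E¹ = 1 + u·k[[u]] + t·k((u))[[t]]. -/
def memE1 (φ : LS2 k) : Prop :=
  (∀ j < 0, φ.coeff j = 0) ∧ (∀ i < 0, (φ.coeff 0).coeff i = 0) ∧ (φ.coeff 0).coeff 0 = 1

/-- Membership in m = u·k[[u]] + t·k((u))[[t]]. -/
def memM (x : LS2 k) : Prop :=
  (∀ j < 0, x.coeff j = 0) ∧ (∀ i ≤ 0, (x.coeff 0).coeff i = 0)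

/-- Partial sums of the logarithm series of φ = 1 + x. -/
def partialLog (φ : LS2 k) (n : ℕ) : LS2 k :=
  ∑ m ∈ Finset.Icc 1 n, ((-1 : LS2 k) ^ (m + 1) * (m : LS2 k)⁻¹) * (φ - 1) ^ m

/-- `L` is the logarithm of `φ`: every coefficient of the partial sums of the log series
is eventually equal to the corresponding coefficient of `L` (convergence in the topology of
the two-dimensional local field). -/
def IsLogOf (φ L : LS2 k) : Prop :=
  ∀ a b : ℤ, ∃ N : ℕ, ∀ n ≥ N, ((partialLog φ n).coeff b).coeff a = (L.coeff b).coeff a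

/-- Partial sums of the exponential series. -/
def partialExp (x : LS2 k) (n : ℕ) : LS2 k :=
  ∑ m ∈ Finset.range (n + 1), ((Nat.factorial m : LS2 k))⁻¹ * x ^ m

/-- `E` is the exponential of `x`, coefficientwise. -/
def IsExpOf (x E : LS2 k) : Prop :=
  ∀ a b : ℤ, ∃ N : ℕ, ∀ n ≥ N, ((partialExp x n).coeff b).coeff a = (E.coeff b).coeff a

/-- Partial sums of the exponential series in the one-dimensional field k((t)). -/
def partialExp1 (x : LS k) (n : ℕ) : LS k :=
  ∑ m ∈ Finset.range (n + 1), ((Nat.factorial m : LS k))⁻¹ * x ^ m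

/-- `E` is the exponential of `x` in k((t)), coefficientwise. -/
def IsExpOf1 (x E : LS k) : Prop :=
  ∀ a : ℤ, ∃ N : ℕ, ∀ n ≥ N, (partialExp1 x n).coeff a = E.coeff a

/-- The tame symbol of the local field k((t)). -/
def tame1 (φ ψ : LS k) : k :=
  (-1 : k) ^ (φ.order * ψ.order) * (φ ^ ψ.order * ψ ^ (-φ.order)).coeff 0


section Helpers

open HahnSeries

variable {R : Type} [CommRing R]

lemma lsDeriv_coeff' {A : Type} [AddCommGroup A] (f : LaurentSeries A) (n : ℤ) :
    (lsDeriv f).coeff n = (n + 1) • f.coeff (n + 1) := rfl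

lemma uDeriv_coeff (f : LS2 k) (j : ℤ) : (uDeriv f).coeff j = lsDeriv (f.coeff j) := rfl

lemma coeff_single_mul (b : ℤ) (r : R) (f : HahnSeries ℤ R) (n : ℤ) :
    (HahnSeries.single b r * f).coeff n = r * f.coeff (n - b) := by
  have h := HahnSeries.coeff_single_mul_add (Γ := ℤ) (R := R) (r := r) (x := f)
    (a := n - b) (b := b)
  rwa [sub_add_cancel] at h

lemma vanish_mul {x y : HahnSeries ℤ R}
    (hx : ∀ j < 0, x.coeff j = 0) (hy : ∀ j < 0, y.coeff j = 0) :
    ∀ j < 0, (x * y).coeff j = 0 := by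
  intro j hj
  rw [HahnSeries.coeff_mul]
  refine Finset.sum_eq_zero ?_
  rintro ⟨i1, i2⟩ hmem
  rw [Finset.mem_addAntidiagonal] at hmem
  obtain ⟨-, -, hsum⟩ := hmem
  rcases lt_or_ge i1 0 with h | h
  · rw [hx _ h, zero_mul]
  · rw [hy _ (by omega), mul_zero]

lemma mul_coeff_zero' {x y : HahnSeries ℤ R}
    (hx : ∀ j < 0, x.coeff j = 0) (hy : ∀ j < 0, y.coeff j = 0) :
    (x * y).coeff 0 = x.coeff 0 * y.coeff 0 := by
  rw [HahnSeries.coeff_mul, Finset.sum_eq_single ((0 : ℤ), (0 : ℤ))]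
  · intro b hb hne
    rw [Finset.mem_addAntidiagonal] at hb
    obtain ⟨-, -, hsum⟩ := hb
    rcases lt_or_ge b.1 0 with h | h
    · rw [hx _ h, zero_mul]
    · rcases lt_or_ge b.2 0 with h2 | h2
      · rw [hy _ h2, mul_zero]
      · exact absurd (Prod.ext (by omega) (by omega)) hne
  · intro habs
    by_cases hx0 : x.coeff 0 = 0
    · rw [hx0, zero_mul]
    by_cases hy0 : y.coeff 0 = 0
    · rw [hy0, mul_zero]
    exact absurd (Finset.mem_addAntidiagonal.mpr
      ⟨(HahnSeries.mem_support x 0).mpr hx0, (HahnSeries.mem_support y 0).mpr hy0,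
        add_zero 0⟩) habs

lemma lsDeriv_vanish {A : Type} [AddCommGroup A] {f : LaurentSeries A}
    (h : ∀ j < 0, f.coeff j = 0) : ∀ j < 0, (lsDeriv f).coeff j = 0 := by
  intro j hj
  rw [lsDeriv_coeff']
  by_cases hj1 : j = -1
  · subst hj1; norm_num
  · rw [h (j + 1) (by omega), smul_zero]

lemma lsDeriv_single_one_mul (a : ℤ) (f : HahnSeries ℤ R) :
    lsDeriv (HahnSeries.single a (1 : R) * f)
      = HahnSeries.single (a - 1) ((a : R)) * f
        + HahnSeries.single a (1 : R) * lsDeriv f := by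
  ext n
  rw [HahnSeries.coeff_add, lsDeriv_coeff', _root_.coeff_single_mul, _root_.coeff_single_mul,
    _root_.coeff_single_mul, one_mul, one_mul, lsDeriv_coeff']
  have h1 : n + 1 - a = n - a + 1 := by ring
  have h2 : n - (a - 1) = n - a + 1 := by ring
  rw [h1, h2, zsmul_eq_mul, zsmul_eq_mul]
  push_cast
  ring

variable {k : Type} [Field k]

lemma uDeriv_single_one_mul (a : ℤ) (f : LS2 k) :
    uDeriv (HahnSeries.single a (1 : LS k) * f)
      = HahnSeries.single a (1 : LS k) * uDeriv f := by
  ext j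
  rw [uDeriv_coeff, _root_.coeff_single_mul, _root_.coeff_single_mul, one_mul, one_mul, uDeriv_coeff]

lemma single_one_mul_single_one (a b : ℤ) :
    HahnSeries.single a (1 : LS k) * HahnSeries.single b (1 : LS k)
      = HahnSeries.single (a + b) (1 : LS k) := by
  rw [HahnSeries.single_mul_single, one_mul]

lemma tElem_pow (n : ℕ) : (tElem : LS2 k) ^ n = HahnSeries.single (n : ℤ) (1 : LS k) := by
  induction n with
  | zero => simp [HahnSeries.single_zero_one]
  | succ n ih =>
      rw [pow_succ, ih, tElem, HahnSeries.single_mul_single, one_mul]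
      norm_cast

lemma tElem_zpow (n : ℤ) : (tElem : LS2 k) ^ n = HahnSeries.single n (1 : LS k) := by
  rcases n with m | m
  · rw [Int.ofNat_eq_coe, zpow_natCast, tElem_pow]
  · rw [zpow_negSucc, tElem_pow]
    refine inv_eq_of_mul_eq_one_right (G := LS2 k) ?_
    rw [HahnSeries.single_mul_single, one_mul]
    have h1 : ((m + 1 : ℕ) : ℤ) + Int.negSucc m = 0 := by
      rw [Int.negSucc_eq]; push_cast; ring
    rw [h1, HahnSeries.single_zero_one]

lemma unit_facts {F : Type} [Field F] {f : HahnSeries ℤ F} (hf : f ≠ 0) (h0 : f.order = 0) :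
    (∀ j < 0, f.coeff j = 0) ∧ (∀ j < 0, f⁻¹.coeff j = 0) ∧
      f⁻¹.coeff 0 = (f.coeff 0)⁻¹ ∧ f.coeff 0 ≠ 0 := by
  have hinv : f⁻¹ ≠ 0 := inv_ne_zero hf
  have hordinv : f⁻¹.order = 0 := by
    have h := HahnSeries.order_mul hf hinv
    rw [mul_inv_cancel₀ hf] at h
    have h1 : (1 : HahnSeries ℤ F).order = 0 := by
      rw [← HahnSeries.single_zero_one, HahnSeries.order_single one_ne_zero]
    omega
  have hvf : ∀ j < 0, f.coeff j = 0 := fun j hj =>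
    HahnSeries.coeff_eq_zero_of_lt_order (by omega)
  have hvi : ∀ j < 0, f⁻¹.coeff j = 0 := fun j hj =>
    HahnSeries.coeff_eq_zero_of_lt_order (by omega)
  have hf0 : f.coeff 0 ≠ 0 := by
    have := (HahnSeries.coeff_order_eq_zero (x := f)).not.mpr hf
    rwa [h0] at this
  have hprod : f.coeff 0 * f⁻¹.coeff 0 = 1 := by
    have := mul_coeff_zero' hvf hvi
    rw [mul_inv_cancel₀ hf] at this
    rw [← this, ← HahnSeries.single_zero_one, HahnSeries.coeff_single_same]
  refine ⟨hvf, hvi, ?_, hf0⟩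
  exact (inv_eq_of_mul_eq_one_right hprod).symm

lemma res_dlog {F : Type} [Field F] {f : LaurentSeries F} (hf : f ≠ 0) :
    (lsDeriv f * f⁻¹).coeff (-1) = (f.order : F) := by
  set b := f.order with hb
  set h := HahnSeries.single (-b) (1 : F) * f with hh
  have hsne : ∀ c : ℤ, HahnSeries.single c (1 : F) ≠ 0 :=
    fun c => HahnSeries.single_ne_zero one_ne_zero
  have hhne : h ≠ 0 := mul_ne_zero (hsne _) hf
  have hhord : h.order = 0 := by
    rw [hh, HahnSeries.order_mul (hsne _) hf, HahnSeries.order_single one_ne_zero]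
    omega
  obtain ⟨hv, hvi, hc0, hc0ne⟩ := unit_facts hhne hhord
  have hfh : f = HahnSeries.single b (1 : F) * h := by
    rw [hh, ← mul_assoc, HahnSeries.single_mul_single, one_mul, add_neg_cancel,
      HahnSeries.single_zero_one, one_mul]
  have hfinv : f⁻¹ = HahnSeries.single (-b) (1 : F) * h⁻¹ := by
    rw [hfh, mul_inv_rev]
    have : (HahnSeries.single b (1 : F))⁻¹ = HahnSeries.single (-b) (1 : F) := by
      refine inv_eq_of_mul_eq_one_right ?_
      rw [HahnSeries.single_mul_single, one_mul, add_neg_cancel, HahnSeries.single_zero_one]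
    rw [this, mul_comm]
  have key : lsDeriv f * f⁻¹ = HahnSeries.single (-1) ((b : F)) + lsDeriv h * h⁻¹ := by
    calc lsDeriv f * f⁻¹
        = (HahnSeries.single (b - 1) ((b : F)) * h + HahnSeries.single b (1 : F) * lsDeriv h)
            * (HahnSeries.single (-b) (1 : F) * h⁻¹) := by
          rw [← lsDeriv_single_one_mul, ← hfh, hfinv]
      _ = HahnSeries.single (b - 1) ((b : F)) * HahnSeries.single (-b) (1 : F) * (h * h⁻¹)
            + HahnSeries.single b (1 : F) * HahnSeries.single (-b) (1 : F)
              * (lsDeriv h * h⁻¹) := by ring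
      _ = HahnSeries.single (-1) ((b : F)) + lsDeriv h * h⁻¹ := by
          rw [HahnSeries.single_mul_single, HahnSeries.single_mul_single,
            mul_inv_cancel₀ hhne, mul_one, one_mul, mul_one]
          have e1 : b - 1 + -b = (-1 : ℤ) := by ring
          have e2 : b + -b = (0 : ℤ) := by ring
          rw [e1, e2, HahnSeries.single_zero_one, one_mul]
  rw [key, HahnSeries.coeff_add, HahnSeries.coeff_single_same,
    vanish_mul (lsDeriv_vanish hv) hvi (-1) (by norm_num), add_zero]

end Helpers


instance (k : Type) [Field k] : IsRightCancelAdd (LS2 k) :=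
  ⟨fun a b c h =>
    calc b = b + a + -a := (add_neg_cancel_right b a).symm
      _ = c + a + -a := by rw [show b + a = c + a from h]
      _ = c := add_neg_cancel_right c a⟩

instance (k : Type) [Field k] : IsLeftCancelAdd (LS2 k) :=
  ⟨fun a b c h =>
    calc b = -a + (a + b) := (neg_add_cancel_left a b).symm
      _ = -a + (a + c) := by rw [show a + b = a + c from h]
      _ = c := neg_add_cancel_left a c⟩

/-- res_{K/k}((dφ/φ)∧(dψ/ψ)) equals the determinant of the
bivaluation vectors of φ and ψ, for K = k((u))((t)), char k = 0. -/
theorem total_residue_eq_det (k : Type) [Field k] [CharZero k] (φ ψ : LS2 k)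
    (hφ : φ ≠ 0) (hψ : ψ ≠ 0) :
    res2 (wedge φ ψ) =
      ((((φ * tElem ^ (-φ.order)).coeff 0).order * ψ.order
        - φ.order * (((ψ * tElem ^ (-ψ.order)).coeff 0).order) : ℤ) : k) := by
  classical
  set a := φ.order with ha
  set a' := ψ.order with ha'
  set f := φ * tElem ^ (-a) with hfdef
  set g := ψ * tElem ^ (-a') with hgdef
  have hsne : ∀ c : ℤ, (HahnSeries.single c (1 : LS k) : LS2 k) ≠ 0 :=
    fun c => HahnSeries.single_ne_zero one_ne_zero
  have hφ' : φ = HahnSeries.single a (1 : LS k) * f := by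
    rw [hfdef, tElem_zpow]
    have h1 : HahnSeries.single a (1 : LS k) * (φ * HahnSeries.single (-a) (1 : LS k))
        = φ * (HahnSeries.single a (1 : LS k) * HahnSeries.single (-a) (1 : LS k)) := by
      ring
    rw [h1, HahnSeries.single_mul_single, one_mul, add_neg_cancel,
      HahnSeries.single_zero_one]
    exact (mul_one φ).symm
  have hψ' : ψ = HahnSeries.single a' (1 : LS k) * g := by
    rw [hgdef, tElem_zpow]
    have h1 : HahnSeries.single a' (1 : LS k) * (ψ * HahnSeries.single (-a') (1 : LS k))
        = ψ * (HahnSeries.single a' (1 : LS k) * HahnSeries.single (-a') (1 : LS k)) := by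
      ring
    rw [h1, HahnSeries.single_mul_single, one_mul, add_neg_cancel,
      HahnSeries.single_zero_one]
    exact (mul_one ψ).symm
  have hf : f ≠ 0 := by
    rw [hfdef, tElem_zpow]; exact mul_ne_zero hφ (hsne _)
  have hg : g ≠ 0 := by
    rw [hgdef, tElem_zpow]; exact mul_ne_zero hψ (hsne _)
  have hford : f.order = 0 := by
    rw [hfdef, tElem_zpow, HahnSeries.order_mul hφ (hsne _),
      HahnSeries.order_single one_ne_zero, ← ha]
    omega
  have hgord : g.order = 0 := by
    rw [hgdef, tElem_zpow, HahnSeries.order_mul hψ (hsne _),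
      HahnSeries.order_single one_ne_zero, ← ha']
    omega
  obtain ⟨hvf, hvf', hf0inv, hf0⟩ := unit_facts hf hford
  obtain ⟨hvg, hvg', hg0inv, hg0⟩ := unit_facts hg hgord
  have huφ : uDeriv φ = HahnSeries.single a (1 : LS k) * uDeriv f := by
    rw [hφ', uDeriv_single_one_mul]
  have huψ : uDeriv ψ = HahnSeries.single a' (1 : LS k) * uDeriv g := by
    rw [hψ', uDeriv_single_one_mul]
  have htφ : tDeriv φ = HahnSeries.single (-1) ((a : LS k))
      * (HahnSeries.single a (1 : LS k) * f)
      + HahnSeries.single a (1 : LS k) * tDeriv f := by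
    simp only [tDeriv]
    have h1 : (-1 : ℤ) + a = a - 1 := by ring
    have hsm : HahnSeries.single (-1) ((a : LS k)) * HahnSeries.single a (1 : LS k)
        = HahnSeries.single (a - 1) ((a : LS k)) := by
      rw [HahnSeries.single_mul_single, mul_one, h1]
    rw [hφ', lsDeriv_single_one_mul, ← hsm]
    ring
  have htψ : tDeriv ψ = HahnSeries.single (-1) ((a' : LS k))
      * (HahnSeries.single a' (1 : LS k) * g)
      + HahnSeries.single a' (1 : LS k) * tDeriv g := by
    simp only [tDeriv]
    have h1 : (-1 : ℤ) + a' = a' - 1 := by ring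
    have hsm : HahnSeries.single (-1) ((a' : LS k)) * HahnSeries.single a' (1 : LS k)
        = HahnSeries.single (a' - 1) ((a' : LS k)) := by
      rw [HahnSeries.single_mul_single, mul_one, h1]
    rw [hψ', lsDeriv_single_one_mul, ← hsm]
    ring
  have hSa : (HahnSeries.single a (1 : LS k) : LS2 k) ≠ 0 := hsne a
  have hSa' : (HahnSeries.single a' (1 : LS k) : LS2 k) ≠ 0 := hsne a'
  have key : wedge φ ψ =
      HahnSeries.single (-1) ((a' : LS k)) * (uDeriv f * f⁻¹)
      - HahnSeries.single (-1) ((a : LS k)) * (uDeriv g * g⁻¹)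
      + (uDeriv f * tDeriv g - tDeriv f * uDeriv g) * (f⁻¹ * g⁻¹) := by
    have hNf : f * f⁻¹ = 1 := mul_inv_cancel₀ (G₀ := LS2 k) hf
    have hNg : g * g⁻¹ = 1 := mul_inv_cancel₀ (G₀ := LS2 k) hg
    have hD : (HahnSeries.single a (1 : LS k) * f) * (HahnSeries.single a' (1 : LS k) * g) ≠ 0 :=
      mul_ne_zero (mul_ne_zero hSa hf) (mul_ne_zero hSa' hg)
    have hP : ((HahnSeries.single a (1 : LS k) * f) * (HahnSeries.single a' (1 : LS k) * g))⁻¹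
        * ((HahnSeries.single a (1 : LS k) * f) * (HahnSeries.single a' (1 : LS k) * g)) = 1 :=
      inv_mul_cancel₀ (G₀ := LS2 k) hD
    unfold wedge
    rw [huφ, huψ, htφ, htψ, hφ', hψ']
    linear_combination
      (HahnSeries.single (-1) ((a' : LS k)) * (uDeriv f * f⁻¹)
        - HahnSeries.single (-1) ((a : LS k)) * (uDeriv g * g⁻¹)
        + (uDeriv f * tDeriv g - tDeriv f * uDeriv g) * (f⁻¹ * g⁻¹)) * hP
      + (((HahnSeries.single a (1 : LS k) * f) * (HahnSeries.single a' (1 : LS k) * g))⁻¹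
          * HahnSeries.single a (1 : LS k) * HahnSeries.single a' (1 : LS k))
        * (-(HahnSeries.single (-1) ((a' : LS k)) * uDeriv f * g)
            - (uDeriv f * tDeriv g - tDeriv f * uDeriv g)) * hNf
      + (((HahnSeries.single a (1 : LS k) * f) * (HahnSeries.single a' (1 : LS k) * g))⁻¹
          * HahnSeries.single a (1 : LS k) * HahnSeries.single a' (1 : LS k))
        * (HahnSeries.single (-1) ((a : LS k)) * f * uDeriv g
            - (uDeriv f * tDeriv g - tDeriv f * uDeriv g) * (f * f⁻¹)) * hNg
  have hvA : ∀ j < 0, (uDeriv f).coeff j = 0 := by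
    intro j hj; rw [uDeriv_coeff, hvf j hj, lsDeriv_zero]
  have hvB : ∀ j < 0, (uDeriv g).coeff j = 0 := by
    intro j hj; rw [uDeriv_coeff, hvg j hj, lsDeriv_zero]
  have hvAt : ∀ j < 0, (tDeriv f).coeff j = 0 := lsDeriv_vanish hvf
  have hvBt : ∀ j < 0, (tDeriv g).coeff j = 0 := lsDeriv_vanish hvg
  have hthird : ((uDeriv f * tDeriv g - tDeriv f * uDeriv g) * (f⁻¹ * g⁻¹)).coeff (-1) = 0 := by
    refine vanish_mul ?_ (vanish_mul hvf' hvg') (-1) (by norm_num)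
    intro j hj
    rw [HahnSeries.coeff_sub, vanish_mul hvA hvBt j hj, vanish_mul hvAt hvB j hj, sub_zero]
  have hA0 : (uDeriv f * f⁻¹).coeff 0 = lsDeriv (f.coeff 0) * (f.coeff 0)⁻¹ := by
    rw [mul_coeff_zero' hvA hvf', uDeriv_coeff, hf0inv]
  have hB0 : (uDeriv g * g⁻¹).coeff 0 = lsDeriv (g.coeff 0) * (g.coeff 0)⁻¹ := by
    rw [mul_coeff_zero' hvB hvg', uDeriv_coeff, hg0inv]
  have hcast : ∀ (n : ℤ) (Y : LS k), (((n : ℤ) : LS k) * Y).coeff (-1) = (n : k) * Y.coeff (-1) := by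
    intro n Y
    have h1 : ((n : ℤ) : LS k) = HahnSeries.single (0 : ℤ) ((n : k)) := by
      rw [← map_intCast (HahnSeries.C : k →+* LS k) n]
      rfl
    rw [h1, coeff_single_mul]
    norm_num
  rw [key]
  simp only [res2]
  rw [HahnSeries.coeff_add, HahnSeries.coeff_sub, hthird, add_zero]
  rw [coeff_single_mul, coeff_single_mul]
  have hidx : (-1 : ℤ) - -1 = 0 := by norm_num
  rw [hidx, hA0, hB0, HahnSeries.coeff_sub, hcast, hcast, res_dlog hf0, res_dlog hg0]
  push_cast
  ring

end
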